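/- Let P_0,…,P_M be probability measures with densities p_0,…,p_M with respect to a dominating measure ν, such that all Hellinger affinities ∫√(p_j p_0) dν are positive. Then for every vector v ∈ ℝ^M, vᵀ ρ(P_0|P_1,…,P_M) v = ∫ (Σ_{j=1}^M v_j (√p_j / ∫√(p_j p_0)dν - √p_0))² dν ≥ 0; in particular the Hellinger affinity matrix ρ(P_0|P_1,…,P_M) is symmetric positive semi-definite. -/

import Mathlib

open MeasureTheory ProbabilityTheory Matrix

lemma quad_aux {Ω : Type*} [MeasurableSpace Ω] {ν : Measure Ω} {M : ℕ} (f : Fin M → Ω → ℝ)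
    (hf : ∀ j k, Integrable (fun ω => f j ω * f k ω) ν) (v : Fin M → ℝ) :
    ∫ ω, (∑ j, v j * f j ω) ^ 2 ∂ν = ∑ j, ∑ k, v j * v k * ∫ ω, f j ω * f k ω ∂ν := by
  have h1 : ∀ ω, (∑ j, v j * f j ω) ^ 2 = ∑ j, ∑ k, (v j * v k) * (f j ω * f k ω) := by
    intro ω
    rw [sq, Finset.sum_mul_sum]
    exact Finset.sum_congr rfl fun j _ => Finset.sum_congr rfl fun k _ => by ring
  simp_rw [h1]
  rw [integral_finset_sum _ fun j _ => integrable_finset_sum _ fun k _ => ((hf j k).const_mul _)]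
  refine Finset.sum_congr rfl fun j _ => ?_
  rw [integral_finset_sum _ fun k _ => ((hf j k).const_mul _)]
  exact Finset.sum_congr rfl fun k _ => integral_const_mul _ _

theorem stmt6 {Ω : Type*} [MeasurableSpace Ω] {M : ℕ} (ν : Measure Ω)
    (P : Fin (M + 1) → Measure Ω) [∀ j, IsProbabilityMeasure (P j)]
    (p : Fin (M + 1) → Ω → ℝ)
    (hpm : ∀ j, Measurable (p j)) (hp0 : ∀ j ω, 0 ≤ p j ω)
    (hpint : ∀ j, Integrable (p j) ν)
    (hP : ∀ j, P j = ν.withDensity fun ω => ENNReal.ofReal (p j ω))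
    (haff : ∀ j, 0 < ∫ ω, Real.sqrt (p j ω * p 0 ω) ∂ν) :
    (∀ v : Fin M → ℝ,
      v ⬝ᵥ ((Matrix.of fun j k : Fin M =>
          (∫ ω, Real.sqrt (p j.succ ω * p k.succ ω) ∂ν) /
            ((∫ ω, Real.sqrt (p j.succ ω * p 0 ω) ∂ν) *
              ∫ ω, Real.sqrt (p k.succ ω * p 0 ω) ∂ν) - 1) *ᵥ v) =
        ∫ ω, (∑ j : Fin M,
          v j * (Real.sqrt (p j.succ ω) / (∫ ω', Real.sqrt (p j.succ ω' * p 0 ω') ∂ν) -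
            Real.sqrt (p 0 ω))) ^ 2 ∂ν) ∧
    (Matrix.of fun j k : Fin M =>
        (∫ ω, Real.sqrt (p j.succ ω * p k.succ ω) ∂ν) /
          ((∫ ω, Real.sqrt (p j.succ ω * p 0 ω) ∂ν) *
            ∫ ω, Real.sqrt (p k.succ ω * p 0 ω) ∂ν) - 1).IsSymm ∧
    (Matrix.of fun j k : Fin M =>
        (∫ ω, Real.sqrt (p j.succ ω * p k.succ ω) ∂ν) /
          ((∫ ω, Real.sqrt (p j.succ ω * p 0 ω) ∂ν) *
            ∫ ω, Real.sqrt (p k.succ ω * p 0 ω) ∂ν) - 1).PosSemidef := by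
  -- integrability of products of square roots
  have hsq : ∀ j k : Fin (M + 1),
      Integrable (fun ω => Real.sqrt (p j ω) * Real.sqrt (p k ω)) ν := by
    intro j k
    refine Integrable.mono (((hpint j).add (hpint k)).div_const 2)
      ((hpm j).sqrt.mul (hpm k).sqrt).aestronglyMeasurable ?_
    filter_upwards with ω
    simp only [Pi.add_apply]
    have h1 := Real.sq_sqrt (hp0 j ω)
    have h2 := Real.sq_sqrt (hp0 k ω)
    have h3 := Real.sqrt_nonneg (p j ω)
    have h4 := Real.sqrt_nonneg (p k ω)
    rw [Real.norm_eq_abs, Real.norm_eq_abs,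
      abs_of_nonneg (mul_nonneg h3 h4),
      abs_of_nonneg (div_nonneg (add_nonneg (hp0 j ω) (hp0 k ω)) (by norm_num))]
    nlinarith [sq_nonneg (Real.sqrt (p j ω) - Real.sqrt (p k ω))]
  have hsqrt_mul : ∀ j k : Fin (M + 1),
      (∫ ω, Real.sqrt (p j ω * p k ω) ∂ν)
        = ∫ ω, Real.sqrt (p j ω) * Real.sqrt (p k ω) ∂ν := by
    intro j k
    refine integral_congr_ae (Filter.Eventually.of_forall fun ω => ?_)
    exact Real.sqrt_mul (hp0 j ω) _
  have hp01 : (∫ ω, p 0 ω ∂ν) = 1 := by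
    have h1 : ∫⁻ ω, ENNReal.ofReal (p 0 ω) ∂ν = 1 := by
      have h := measure_univ (μ := P 0)
      rw [hP 0, withDensity_apply _ MeasurableSet.univ, setLIntegral_univ] at h
      exact h
    rw [integral_eq_lintegral_of_nonneg_ae (Filter.Eventually.of_forall (hp0 0))
      (hpm 0).aestronglyMeasurable, h1]
    simp
  -- integrability of f_j * f_k
  have hff : ∀ j k : Fin M, Integrable (fun ω =>
      (Real.sqrt (p j.succ ω) / (∫ ω', Real.sqrt (p j.succ ω' * p 0 ω') ∂ν) -
        Real.sqrt (p 0 ω)) *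
      (Real.sqrt (p k.succ ω) / (∫ ω', Real.sqrt (p k.succ ω' * p 0 ω') ∂ν) -
        Real.sqrt (p 0 ω))) ν := by
    intro j k
    set aj := ∫ ω', Real.sqrt (p j.succ ω' * p 0 ω') ∂ν with haj
    set ak := ∫ ω', Real.sqrt (p k.succ ω' * p 0 ω') ∂ν with hak
    have heq : (fun ω =>
        (Real.sqrt (p j.succ ω) / aj - Real.sqrt (p 0 ω)) *
        (Real.sqrt (p k.succ ω) / ak - Real.sqrt (p 0 ω))) = fun ω =>
        (aj * ak)⁻¹ * (Real.sqrt (p j.succ ω) * Real.sqrt (p k.succ ω)) -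
        aj⁻¹ * (Real.sqrt (p j.succ ω) * Real.sqrt (p 0 ω)) -
        ak⁻¹ * (Real.sqrt (p 0 ω) * Real.sqrt (p k.succ ω)) +
        Real.sqrt (p 0 ω) * Real.sqrt (p 0 ω) := by
      funext ω; field_simp; ring
    rw [heq]
    exact ((((hsq _ _).const_mul _).sub ((hsq _ _).const_mul _)).sub
      ((hsq _ _).const_mul _)).add (hsq 0 0)
  -- value of ∫ f_j f_k
  have hval : ∀ j k : Fin M, (∫ ω,
      (Real.sqrt (p j.succ ω) / (∫ ω', Real.sqrt (p j.succ ω' * p 0 ω') ∂ν) -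
        Real.sqrt (p 0 ω)) *
      (Real.sqrt (p k.succ ω) / (∫ ω', Real.sqrt (p k.succ ω' * p 0 ω') ∂ν) -
        Real.sqrt (p 0 ω)) ∂ν) =
      (∫ ω, Real.sqrt (p j.succ ω * p k.succ ω) ∂ν) /
        ((∫ ω, Real.sqrt (p j.succ ω * p 0 ω) ∂ν) *
          ∫ ω, Real.sqrt (p k.succ ω * p 0 ω) ∂ν) - 1 := by
    intro j k
    set aj := ∫ ω', Real.sqrt (p j.succ ω' * p 0 ω') ∂ν with haj
    set ak := ∫ ω', Real.sqrt (p k.succ ω' * p 0 ω') ∂ν with hak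
    have hajpos : 0 < aj := haff j.succ
    have hakpos : 0 < ak := haff k.succ
    have heq : (fun ω =>
        (Real.sqrt (p j.succ ω) / aj - Real.sqrt (p 0 ω)) *
        (Real.sqrt (p k.succ ω) / ak - Real.sqrt (p 0 ω))) = fun ω =>
        (aj * ak)⁻¹ * (Real.sqrt (p j.succ ω) * Real.sqrt (p k.succ ω)) -
        aj⁻¹ * (Real.sqrt (p j.succ ω) * Real.sqrt (p 0 ω)) -
        ak⁻¹ * (Real.sqrt (p 0 ω) * Real.sqrt (p k.succ ω)) +
        Real.sqrt (p 0 ω) * Real.sqrt (p 0 ω) := by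
      funext ω; field_simp; ring
    rw [heq, integral_add, integral_sub, integral_sub, integral_const_mul,
      integral_const_mul, integral_const_mul]
    · have e1 : (∫ ω, Real.sqrt (p j.succ ω) * Real.sqrt (p 0 ω) ∂ν) = aj :=
        (hsqrt_mul j.succ 0).symm
      have e2 : (∫ ω, Real.sqrt (p 0 ω) * Real.sqrt (p k.succ ω) ∂ν) = ak := by
        rw [hak]
        refine Eq.trans ?_ (hsqrt_mul k.succ 0).symm
        exact integral_congr_ae (Filter.Eventually.of_forall fun ω => by simp [mul_comm])
      have e3 : (∫ ω, Real.sqrt (p 0 ω) * Real.sqrt (p 0 ω) ∂ν) = 1 := by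
        rw [← hp01]
        exact integral_congr_ae (Filter.Eventually.of_forall fun ω =>
          Real.mul_self_sqrt (hp0 0 ω))
      rw [e1, e2, e3, hsqrt_mul j.succ k.succ]
      field_simp
      ring
    · exact (hsq _ _).const_mul _
    · exact (hsq _ _).const_mul _
    · exact ((hsq _ _).const_mul _).sub ((hsq _ _).const_mul _)
    · exact (hsq _ _).const_mul _
    · exact (((hsq _ _).const_mul _).sub ((hsq _ _).const_mul _)).sub
        ((hsq _ _).const_mul _)
    · exact hsq 0 0
  have hmain : ∀ v : Fin M → ℝ,
      v ⬝ᵥ ((Matrix.of fun j k : Fin M =>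
          (∫ ω, Real.sqrt (p j.succ ω * p k.succ ω) ∂ν) /
            ((∫ ω, Real.sqrt (p j.succ ω * p 0 ω) ∂ν) *
              ∫ ω, Real.sqrt (p k.succ ω * p 0 ω) ∂ν) - 1) *ᵥ v) =
        ∫ ω, (∑ j : Fin M,
          v j * (Real.sqrt (p j.succ ω) / (∫ ω', Real.sqrt (p j.succ ω' * p 0 ω') ∂ν) -
            Real.sqrt (p 0 ω))) ^ 2 ∂ν := by
    intro v
    rw [quad_aux (fun j ω => Real.sqrt (p j.succ ω) /
        (∫ ω', Real.sqrt (p j.succ ω' * p 0 ω') ∂ν) - Real.sqrt (p 0 ω)) hff v]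
    simp only [dotProduct, Matrix.mulVec, Matrix.of_apply, Finset.mul_sum]
    refine Finset.sum_congr rfl fun j _ => Finset.sum_congr rfl fun k _ => ?_
    rw [hval j k]
    ring
  have hsym : (Matrix.of fun j k : Fin M =>
      (∫ ω, Real.sqrt (p j.succ ω * p k.succ ω) ∂ν) /
        ((∫ ω, Real.sqrt (p j.succ ω * p 0 ω) ∂ν) *
          ∫ ω, Real.sqrt (p k.succ ω * p 0 ω) ∂ν) - 1).IsSymm := by
    ext j k
    simp only [Matrix.transpose_apply, Matrix.of_apply]
    rw [show (∫ ω, Real.sqrt (p k.succ ω * p j.succ ω) ∂ν)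
        = ∫ ω, Real.sqrt (p j.succ ω * p k.succ ω) ∂ν from
      integral_congr_ae (Filter.Eventually.of_forall fun ω => by simp [mul_comm]),
      mul_comm (∫ ω, Real.sqrt (p k.succ ω * p 0 ω) ∂ν)]
  refine ⟨hmain, hsym, posSemidef_iff_dotProduct_mulVec.mpr ⟨?_, fun x => ?_⟩⟩
  · rw [Matrix.IsHermitian]
    ext j k
    have := congrFun (congrFun hsym j) k
    simpa using this
  · have hstar : star x = x := rfl
    rw [hstar, hmain x]
    exact integral_nonneg fun ω => sq_nonneg _
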